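/- Let → be a relation on terms closed under the operation t ↦ f t₁…t…tₙ (placing a term as an argument of a symbol application). If the chain relation →ch satisfies →ch ⊆ →⁺ ∘ ⊵ (rewrite steps followed by the subterm relation), and → ∪ ⊳ is well-founded on a term t, then →ch is well-founded on t. -/

import Mathlib

/-- Accessibility below a point: the relation `r` (read `r x y` as a step from
`x` to `y`) terminates from `t` iff `t` is accessible for the flipped relation. -/
def TerminatesOn {α : Type*} (r : α → α → Prop) (t : α) : Prop :=
  Acc (fun a b => r b a) t

/-- Abstract form: if every chain step is some rewrite steps followed by the
(reflexive) subterm relation (`ch ⊆ →⁺ ∘ ⊵`), and `→ ∪ ⊳` terminates from `t`,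
then the chain relation terminates from `t`.  Here `sub x y` means `x ⊳ y`,
i.e. `y` is a strict subterm of `x`. -/
theorem chain_terminatesOn {α : Type*} (step sub ch : α → α → Prop)
    (hch : ∀ x y, ch x y → ∃ z, Relation.TransGen step x z ∧ (z = y ∨ sub z y))
    (t : α) (ht : TerminatesOn (fun x y => step x y ∨ sub x y) t) :
    TerminatesOn ch t := by
  have h2 : Acc (fun a b => Relation.TransGen (fun x y => step x y ∨ sub x y) b a) t := by
    have := ht.transGen
    apply Subrelation.accessible (r := Relation.TransGen fun a b =>
      (fun x y => step x y ∨ sub x y) b a) ?_ this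
    intro a b h
    induction h with
    | single h => exact Relation.TransGen.single h
    | tail _ h ih => exact Relation.TransGen.head h ih
  apply Subrelation.accessible (r := fun a b =>
      Relation.TransGen (fun x y => step x y ∨ sub x y) b a) ?_ h2
  intro a b h
  obtain ⟨z, hz, hz2⟩ := hch b a h
  have h1 : Relation.TransGen (fun x y => step x y ∨ sub x y) b z :=
    Relation.TransGen.mono (fun x y h => Or.inl h) _ _ hz
  rcases hz2 with rfl | hs
  · exact h1
  · exact h1.tail (Or.inr hs)
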